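/- Let (N,g) be a complete Riemannian manifold, y ∈ N, ξ ∈ S_yN, γ the unit-speed geodesic with initial data (y,ξ), s > 0 with d_g(y, γ(s)) = s, and x = γ(s). Then the cut time admits the characterization τ(y,ξ) = inf{ s + r : r > 0 and there exists ε > 0 with B(x, r+ε) ⊂ cl(B(y, s+r)) }. -/

import Mathlib

/-- A unit-speed minimizing geodesic segment on `[a,b]`, in metric terms. -/
def IsMinGeodOn {N : Type*} [MetricSpace N] (γ : ℝ → N) (a b : ℝ) : Prop :=
  ∀ s ∈ Set.Icc a b, ∀ t ∈ Set.Icc a b, dist (γ s) (γ t) = |s - t|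

/-- A (complete, unit-speed) geodesic: a curve that is locally distance minimizing. -/
def IsGeodesic {N : Type*} [MetricSpace N] (γ : ℝ → N) : Prop :=
  ∀ t : ℝ, ∃ ε > 0, IsMinGeodOn γ (t - ε) (t + ε)

/-- The cut time `τ(y,ξ) = sup {t > 0 : dist(γ 0, γ t) = t}` of a unit-speed geodesic,
valued in `ℝ≥0∞` (so `sInf ∅ = +∞` below realises the convention `inf ∅ = +∞`). -/
noncomputable def cutTime {N : Type*} [MetricSpace N] (γ : ℝ → N) : ENNReal :=
  sSup (ENNReal.ofReal '' {t : ℝ | 0 < t ∧ dist (γ 0) (γ t) = t})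

section helpers
open Set Metric
variable {N : Type*} [MetricSpace N]

lemma IsMinGeodOn.mono' {γ : ℝ → N} {a b a' b' : ℝ}
    (h : IsMinGeodOn γ a b) (ha : a ≤ a') (hb : b' ≤ b) : IsMinGeodOn γ a' b' :=
  fun u hu t ht => h u ⟨ha.trans hu.1, hu.2.trans hb⟩ t ⟨ha.trans ht.1, ht.2.trans hb⟩

lemma IsMinGeodOn.congr' {γ₁ γ₂ : ℝ → N} {a b : ℝ} (h : IsMinGeodOn γ₁ a b)
    (he : ∀ t ∈ Set.Icc a b, γ₂ t = γ₁ t) : IsMinGeodOn γ₂ a b := by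
  intro u hu t ht
  rw [he u hu, he t ht]; exact h u hu t ht

lemma IsMinGeodOn.shift' {σ : ℝ → N} {a b s : ℝ} (h : IsMinGeodOn σ (a - s) (b - s)) :
    IsMinGeodOn (fun t => σ (t - s)) a b := by
  intro u hu t ht
  have := h (u - s) ⟨by linarith [hu.1], by linarith [hu.2]⟩
    (t - s) ⟨by linarith [ht.1], by linarith [ht.2]⟩
  simpa using this

lemma IsGeodesic.continuous' {γ : ℝ → N} (hγ : IsGeodesic γ) : Continuous γ := by
  rw [continuous_iff_continuousAt]
  intro t
  obtain ⟨ε, hε, hm⟩ := hγ t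
  rw [Metric.continuousAt_iff]
  intro δ hδ
  refine ⟨min ε δ, lt_min hε hδ, fun {x} hx => ?_⟩
  have hx' : |x - t| < min ε δ := by simpa [Real.dist_eq] using hx
  have : dist (γ x) (γ t) = |x - t| :=
    hm x ⟨by cases abs_lt.1 (hx'.trans_le (min_le_left _ _)); linarith,
           by cases abs_lt.1 (hx'.trans_le (min_le_left _ _)); linarith⟩
      t ⟨by linarith, by linarith⟩
  rw [this]; exact hx'.trans_le (min_le_right _ _)

lemma IsGeodesic.lip {γ : ℝ → N} (hγ : IsGeodesic γ) (a b : ℝ) :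
    dist (γ a) (γ b) ≤ |a - b| := by
  have main : ∀ a b : ℝ, a ≤ b → dist (γ a) (γ b) ≤ b - a := by
    intro a b hab
    set S : Set ℝ := {t | dist (γ a) (γ t) ≤ t - a} with hS
    have hcl : IsClosed S :=
      isClosed_le (continuous_const.dist hγ.continuous') (by fun_prop)
    have hsub : Icc a b ⊆ S := by
      apply IsClosed.Icc_subset_of_forall_exists_gt (hcl.inter isClosed_Icc)
      · simp [hS]
      · rintro x ⟨hxS, hx⟩ z hz
        obtain ⟨ε, hε, hm⟩ := hγ x
        refine ⟨min z (x + ε), ⟨?_, lt_min hz (by linarith), min_le_left _ _⟩⟩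
        have h1 : dist (γ x) (γ (min z (x + ε))) = |x - min z (x + ε)| :=
          hm x ⟨by linarith, by linarith⟩ _
            ⟨le_trans (by linarith) (le_of_lt (lt_min hz (by linarith))),
              min_le_right _ _⟩
        have h2 : x ≤ min z (x + ε) := le_of_lt (lt_min hz (by linarith))
        have := dist_triangle (γ a) (γ x) (γ (min z (x + ε)))
        rw [h1, abs_of_nonpos (by linarith)] at this
        simp only [hS, Set.mem_setOf_eq] at hxS ⊢
        linarith
    have hb : b ∈ S := hsub ⟨hab, le_refl b⟩
    exact hb
  rcases le_total a b with h | h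
  · rw [abs_of_nonpos (by linarith)]; simpa [neg_sub] using main a b h
  · rw [abs_of_nonneg (by linarith), dist_comm]; exact main b a h

lemma min_of_dist {γ : ℝ → N} (hγ : IsGeodesic γ) {a b : ℝ} (hab : a ≤ b)
    (h : dist (γ a) (γ b) = b - a) : IsMinGeodOn γ a b := by
  have main : ∀ u ∈ Icc a b, ∀ t ∈ Icc a b, u ≤ t → dist (γ u) (γ t) = t - u := by
    intro u hu t ht hut
    obtain ⟨hu1, hu2⟩ := hu
    obtain ⟨ht1, ht2⟩ := ht
    have h1 := hγ.lip u t
    have h2 := hγ.lip a u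
    have h3 := hγ.lip t b
    rw [abs_of_nonpos (by linarith)] at h1
    rw [abs_of_nonpos (by linarith)] at h2
    rw [abs_of_nonpos (by linarith)] at h3
    have htri := dist_triangle4 (γ a) (γ u) (γ t) (γ b)
    rw [h] at htri
    linarith
  intro u hu t ht
  rcases le_total u t with h' | h'
  · rw [abs_of_nonpos (by linarith), main u hu t ht h']; ring
  · rw [abs_of_nonneg (by linarith), dist_comm, main t ht u hu h']

end helpers

section key
open Set Metric
variable {N : Type*} [MetricSpace N] [ProperSpace N]

lemma key_lemma
    (hconn : ∀ x y : N, ∃ γ : ℝ → N, IsGeodesic γ ∧ γ 0 = x ∧ γ (dist x y) = y ∧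
      IsMinGeodOn γ 0 (dist x y))
    (hrig : ∀ γ₁ γ₂ : ℝ → N, IsGeodesic γ₁ → IsGeodesic γ₂ →
      ∀ a b : ℝ, a < b → (∀ t ∈ Set.Icc a b, γ₁ t = γ₂ t) → γ₁ = γ₂)
    (γ : ℝ → N) (hγ : IsGeodesic γ) (y : N) (hy : γ 0 = y)
    (s : ℝ) (hs : 0 < s) (hmin : dist y (γ s) = s) (r : ℝ) (hr : 0 < r)
    (hnot : ¬ ∃ ε : ℝ, 0 < ε ∧ Metric.ball (γ s) (r + ε) ⊆ closure (Metric.ball y (s + r))) :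
    dist y (γ (s + r)) = s + r := by
  set x := γ s with hx
  push_neg at hnot
  -- produce a point z with dist x z = r and dist y z = s + r
  have hK : ∀ n : ℕ, ∃ z : N, z ∈ closedBall x (r + 1/(n+1)) ∩ {w | s + r ≤ dist y w} := by
    intro n
    have hpos : (0:ℝ) < 1/(n+1) := by positivity
    obtain ⟨z, hz1, hz2⟩ := Set.not_subset.1 (hnot (1/(n+1)) hpos)
    refine ⟨z, Metric.mem_closedBall.2 (Metric.mem_ball.1 hz1).le, ?_⟩
    have : z ∉ Metric.ball y (s + r) := fun h => hz2 (subset_closure h)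
    simpa [Metric.mem_ball, dist_comm, not_lt] using this
  set K : ℕ → Set N := fun n => closedBall x (r + 1/(n+1)) ∩ {w | s + r ≤ dist y w} with hKdef
  have hclosed : ∀ n, IsClosed (K n) := fun n =>
    (Metric.isClosed_closedBall).inter (isClosed_le continuous_const (continuous_const.dist continuous_id))
  have hmono : ∀ n, K (n+1) ⊆ K n := by
    intro n
    apply Set.inter_subset_inter_left
    apply closedBall_subset_closedBall
    push_cast
    have h1 : (0:ℝ) < (n:ℝ) + 1 := by positivity
    have : (1:ℝ)/((n:ℝ)+1+1) ≤ 1/((n:ℝ)+1) := one_div_le_one_div_of_le h1 (by linarith)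
    linarith
  have hcomp : IsCompact (K 0) :=
    (isCompact_closedBall x _).of_isClosed_subset (hclosed 0) Set.inter_subset_left
  obtain ⟨z, hz⟩ := IsCompact.nonempty_iInter_of_sequence_nonempty_isCompact_isClosed
    K hmono (fun n => hK n) hcomp hclosed
  simp only [Set.mem_iInter, hKdef, Set.mem_inter_iff, mem_closedBall, Set.mem_setOf_eq] at hz
  have hdxz_le : dist z x ≤ r := by
    apply le_of_forall_pos_le_add
    intro ε hε
    obtain ⟨n, hn⟩ := exists_nat_one_div_lt hε
    have := (hz n).1
    push_cast at hn ⊢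
    linarith
  have hdyz_ge : s + r ≤ dist y z := (hz 0).2
  have hdyz : dist y z = s + r := by
    have := dist_triangle y x z
    rw [dist_comm z x] at hdxz_le
    have hyx : dist y x = s := hmin
    linarith
  have hdxz : dist x z = r := by
    have := dist_triangle y x z
    have h2 := hdyz
    have hyx : dist y x = s := hmin
    rw [dist_comm z x] at hdxz_le
    linarith
  -- minimizing geodesic from x to z
  obtain ⟨σ, hσg, hσ0, hσr, hσmin⟩ := hconn x z
  rw [hdxz] at hσr hσmin
  -- concatenation
  set c : ℝ → N := fun t => if t ≤ s then γ t else σ (t - s) with hcdef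
  have hcl : ∀ u : ℝ, u ≤ s → c u = γ u := fun u h => if_pos h
  have hcr : ∀ u : ℝ, s ≤ u → c u = σ (u - s) := by
    intro u h
    by_cases h' : u ≤ s
    · have hus : u = s := le_antisymm h' h
      rw [hcl u h', hus, sub_self, hσ0, hx]
    · exact if_neg h'
  have hγmin : IsMinGeodOn γ 0 s :=
    min_of_dist hγ hs.le (by rw [hy, hmin]; ring)
  -- c is minimizing on [0, s+r]
  have hcmin : IsMinGeodOn c 0 (s + r) := by
    have main : ∀ u ∈ Icc (0:ℝ) (s+r), ∀ t ∈ Icc (0:ℝ) (s+r), u ≤ t →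
        dist (c u) (c t) = t - u := by
      intro u hu t ht hut
      obtain ⟨hu1, hu2⟩ := hu
      obtain ⟨ht1, ht2⟩ := ht
      rcases le_total t s with hts | hts
      · rw [hcl u (hut.trans hts), hcl t hts,
          hγmin u ⟨hu1, hut.trans hts⟩ t ⟨ht1, hts⟩, abs_of_nonpos (by linarith)]
        ring
      rcases le_total u s with hus | hus
      · -- u ≤ s ≤ t
        rw [hcl u hus, hcr t hts]
        have hup : dist (γ u) x = s - u := by
          rw [hx, hγmin u ⟨hu1, hus⟩ s ⟨hs.le, le_refl s⟩, abs_of_nonpos (by linarith)]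
          ring
        have hσ1 : dist x (σ (t - s)) = t - s := by
          rw [← hσ0, hσmin 0 ⟨le_refl 0, hr.le⟩ (t - s) ⟨by linarith, by linarith⟩,
            abs_of_nonpos (by linarith)]
          ring
        have hσ2 : dist (σ (t - s)) z = s + r - t := by
          rw [← hσr, hσmin (t - s) ⟨by linarith, by linarith⟩ r ⟨hr.le, le_refl r⟩,
            abs_of_nonpos (by linarith)]
          ring
        have hlow : dist (γ u) z ≤ dist (γ u) (σ (t - s)) + dist (σ (t - s)) z :=
          dist_triangle _ _ _
        have hyu : dist y (γ u) = u := by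
          rw [← hy, hγmin 0 ⟨le_refl 0, hs.le⟩ u ⟨hu1, hus⟩, abs_of_nonpos (by linarith)]
          ring
        have hyuz : dist y z ≤ dist y (γ u) + dist (γ u) z := dist_triangle _ _ _
        have hup2 : dist (γ u) (σ (t - s)) ≤ dist (γ u) x + dist x (σ (t - s)) :=
          dist_triangle _ _ _
        rw [hdyz] at hyuz
        rw [hyu] at hyuz
        rw [hup, hσ1] at hup2
        rw [hσ2] at hlow
        linarith
      · -- s ≤ u ≤ t
        rw [hcr u hus, hcr t hts]
        rw [hσmin (u - s) ⟨by linarith, by linarith⟩ (t - s) ⟨by linarith, by linarith⟩,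
          abs_of_nonpos (by linarith)]
        ring
    intro u hu t ht
    rcases le_total u t with h' | h'
    · rw [abs_of_nonpos (by linarith [h']), main u hu t ht h']; ring
    · rw [abs_of_nonneg (by linarith [h']), dist_comm, main t ht u hu h']
  -- c is a geodesic
  have hcg : IsGeodesic c := by
    intro t
    rcases lt_trichotomy t s with h | h | h
    · obtain ⟨ε, hε, hm⟩ := hγ t
      refine ⟨min ε (s - t), lt_min hε (by linarith), ?_⟩
      refine (hm.mono' (by simp [min_le_left]; linarith [min_le_left ε (s-t)])
        (by linarith [min_le_left ε (s-t)])).congr' ?_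
      intro u hu
      exact hcl u (by linarith [hu.2, min_le_right ε (s - t)])
    · subst h
      refine ⟨min t r, lt_min (by linarith) hr, ?_⟩
      exact hcmin.mono' (by linarith [min_le_left t r]) (by linarith [min_le_right t r])
    · obtain ⟨ε, hε, hm⟩ := hσg (t - s)
      refine ⟨min ε (t - s), lt_min hε (by linarith), ?_⟩
      have hsh : IsMinGeodOn (fun u => σ (u - s)) (t - min ε (t-s)) (t + min ε (t-s)) :=
        IsMinGeodOn.shift' (hm.mono' (by linarith [min_le_left ε (t-s)])
          (by linarith [min_le_left ε (t-s)]))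
      refine hsh.congr' ?_
      intro u hu
      exact hcr u (by linarith [hu.1, min_le_right ε (t - s)])
  -- rigidity: γ = c
  have hgc : γ = c := hrig γ c hγ hcg 0 s hs (fun t ht => (hcl t ht.2).symm)
  have : γ (s + r) = z := by
    rw [hgc, hcr (s + r) (by linarith)]
    simpa using hσr
  rw [this, hdyz]

end key

/-- Let `(N,g)` be a complete Riemannian manifold (proper metric space
with minimizing geodesics and geodesic rigidity), `γ` the unit-speed geodesic with
`γ 0 = y`, `s > 0` with `dist (y, γ s) = s` and `x = γ s`.  Then the cut time admits the
characterization
`τ(y,ξ) = inf { s + r : r > 0 and ∃ ε > 0, B(x, r+ε) ⊆ cl(B(y, s+r)) }`. -/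
theorem cutTime_eq_inf
    {N : Type*} [MetricSpace N] [ProperSpace N]
    (hconn : ∀ x y : N, ∃ γ : ℝ → N, IsGeodesic γ ∧ γ 0 = x ∧ γ (dist x y) = y ∧
      IsMinGeodOn γ 0 (dist x y))
    (hrig : ∀ γ₁ γ₂ : ℝ → N, IsGeodesic γ₁ → IsGeodesic γ₂ →
      ∀ a b : ℝ, a < b → (∀ t ∈ Set.Icc a b, γ₁ t = γ₂ t) → γ₁ = γ₂)
    (γ : ℝ → N) (hγ : IsGeodesic γ) (y : N) (hy : γ 0 = y)
    (s : ℝ) (hs : 0 < s) (hmin : dist y (γ s) = s) :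
    cutTime γ = sInf {c : ENNReal | ∃ r : ℝ, 0 < r ∧ c = ENNReal.ofReal (s + r) ∧
      ∃ ε : ℝ, 0 < ε ∧ Metric.ball (γ s) (r + ε) ⊆ closure (Metric.ball y (s + r))} := by

  have hsmem : ENNReal.ofReal s ≤ cutTime γ :=
    le_sSup ⟨s, ⟨hs, by rw [hy]; exact hmin⟩, rfl⟩
  apply le_antisymm
  · -- cutTime ≤ sInf
    apply le_sInf
    rintro c ⟨r, hr, rfl, ε, hε, hball⟩
    apply sSup_le
    rintro b ⟨t, ⟨ht0, htd⟩, rfl⟩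
    apply ENNReal.ofReal_le_ofReal
    by_contra hlt
    push_neg at hlt
    set t' := min t (s + r + ε/2) with ht'
    have ht'gt : s + r < t' := lt_min hlt (by linarith)
    have ht'le : t' ≤ t := min_le_left _ _
    have ht'le2 : t' ≤ s + r + ε/2 := min_le_right _ _
    have hmint : IsMinGeodOn γ 0 t := min_of_dist hγ ht0.le (by rw [htd]; ring)
    have hd : dist (γ 0) (γ t') = t' := by
      rw [hmint 0 ⟨le_refl 0, ht0.le⟩ t' ⟨by linarith, ht'le⟩, abs_of_nonpos (by linarith)]
      ring
    have hxball : γ t' ∈ Metric.ball (γ s) (r + ε) := by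
      rw [Metric.mem_ball]
      have := hγ.lip t' s
      rw [abs_of_nonneg (by linarith)] at this
      linarith
    have := Metric.closure_ball_subset_closedBall (hball hxball)
    rw [Metric.mem_closedBall, dist_comm, ← hy, hd] at this
    linarith
  · -- sInf ≤ cutTime
    rcases eq_or_ne (cutTime γ) ⊤ with hT | hT
    · rw [hT]; exact le_top
    apply ENNReal.le_of_forall_pos_le_add
    intro ε hε _
    set τ := (cutTime γ).toReal with hτ
    have hτ0 : 0 ≤ τ := ENNReal.toReal_nonneg
    have hsτ : s ≤ τ := by
      rw [hτ]
      exact (ENNReal.ofReal_le_iff_le_toReal hT).1 hsmem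
    set r : ℝ := τ - s + ε with hrdef
    have hr : 0 < r := by
      have : (0:ℝ) < ε := hε
      simp only [hrdef]; linarith
    have hcond : ∃ ε' : ℝ, 0 < ε' ∧
        Metric.ball (γ s) (r + ε') ⊆ closure (Metric.ball y (s + r)) := by
      by_contra hnot
      have hdist := key_lemma hconn hrig γ hγ y hy s hs hmin r hr hnot
      have : ENNReal.ofReal (s + r) ≤ cutTime γ :=
        le_sSup ⟨s + r, ⟨by linarith, by rw [hy]; exact hdist⟩, rfl⟩
      have hle : s + r ≤ τ := (ENNReal.ofReal_le_iff_le_toReal hT).1 this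
      have : (0:ℝ) < ε := hε
      simp only [hrdef] at hle
      linarith
    have hmem : ENNReal.ofReal (s + r) ∈ {c : ENNReal | ∃ r' : ℝ, 0 < r' ∧
        c = ENNReal.ofReal (s + r') ∧ ∃ ε' : ℝ, 0 < ε' ∧
        Metric.ball (γ s) (r' + ε') ⊆ closure (Metric.ball y (s + r'))} :=
      ⟨r, hr, rfl, hcond⟩
    calc sInf _ ≤ ENNReal.ofReal (s + r) := sInf_le hmem
      _ = ENNReal.ofReal (τ + ε) := by rw [hrdef]; ring_nf
      _ = ENNReal.ofReal τ + ENNReal.ofReal ε := ENNReal.ofReal_add hτ0 ε.2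
      _ = cutTime γ + ε := by rw [hτ, ENNReal.ofReal_toReal hT, ENNReal.ofReal_coe_nnreal]
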